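/- Von Staudt–Clausen corollary: for every even positive integer n, the denominator of B_n (in lowest terms) equals the product of all primes p such that (p-1) divides n. -/

import Mathlib

open Finset

namespace VSC

/-- `q = 0` or the `p`-adic valuation of `q` is at least `k`. -/
def V (p : ℕ) (k : ℤ) (q : ℚ) : Prop := q = 0 ∨ k ≤ padicValRat p q

variable {p : ℕ} [hp : Fact p.Prime]

omit hp in
lemma V.mono {k l : ℤ} {q : ℚ} (h : V p k q) (hkl : l ≤ k) : V p l q :=
  h.imp id fun h' => hkl.trans h'

omit hp in
lemma V.neg {k : ℤ} {q : ℚ} (h : V p k q) : V p k (-q) := by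
  rcases h with rfl | h
  · exact Or.inl (by simp)
  · exact Or.inr (by rwa [padicValRat.neg])

lemma V.add {k : ℤ} {q r : ℚ} (hq : V p k q) (hr : V p k r) : V p k (q + r) := by
  rcases hq with rfl | hq
  · simpa using hr
  rcases hr with rfl | hr
  · rw [add_zero]; exact Or.inr hq
  by_cases h : q + r = 0
  · exact Or.inl h
  · exact Or.inr (le_trans (le_min hq hr) (padicValRat.min_le_padicValRat_add h))

lemma V.sub {k : ℤ} {q r : ℚ} (hq : V p k q) (hr : V p k r) : V p k (q - r) := by
  rw [sub_eq_add_neg]; exact hq.add hr.neg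

lemma V.mul {k l : ℤ} {q r : ℚ} (hq : V p k q) (hr : V p l r) : V p (k + l) (q * r) := by
  rcases hq with rfl | hq
  · exact Or.inl (by simp)
  rcases hr with rfl | hr
  · exact Or.inl (by simp)
  by_cases h0q : q = 0
  · exact Or.inl (by simp [h0q])
  by_cases h0r : r = 0
  · exact Or.inl (by simp [h0r])
  exact Or.inr (by rw [padicValRat.mul h0q h0r]; exact add_le_add hq hr)

lemma V_sum {k : ℤ} {ι : Type*} {s : Finset ι} {F : ι → ℚ}
    (h : ∀ i ∈ s, V p k (F i)) : V p k (∑ i ∈ s, F i) := by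
  classical
  induction s using Finset.induction with
  | empty => exact Or.inl (by simp)
  | insert x s hx ih =>
    rw [Finset.sum_insert hx]
    exact (h _ (Finset.mem_insert_self _ _)).add
      (ih fun i hi => h i (Finset.mem_insert_of_mem hi))

omit hp in
lemma V_intCast (z : ℤ) : V p 0 (z : ℚ) := by
  by_cases hz : z = 0
  · exact Or.inl (by simp [hz])
  · exact Or.inr (by rw [padicValRat.of_int]; exact_mod_cast Nat.zero_le _)

omit hp in
lemma V_natCast (m : ℕ) : V p 0 (m : ℚ) := by
  simpa using V_intCast (p := p) (m : ℤ)

lemma aux_two_pow (w : ℕ) (h : 2 ≤ w) : w + 2 ≤ 2 ^ w := by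
  have h1 : w - 1 < 2 ^ (w - 1) := Nat.lt_two_pow_self
  have h2 : 2 ^ w = 2 * 2 ^ (w - 1) := by
    rw [← pow_succ']; congr 1; omega
  omega

lemma aux_three_pow (w : ℕ) (h : 1 ≤ w) : w + 2 ≤ 3 ^ w := by
  have h1 : w < 2 ^ w := Nat.lt_two_pow_self
  have h2 : 2 ^ w < 3 ^ w := Nat.pow_lt_pow_left (by norm_num) (by omega)
  omega

lemma val_nat_add_two_le (m : ℕ) (hm : 2 ≤ m) (h : ¬(p = 2 ∧ m = 2)) :
    padicValNat p m + 2 ≤ m := by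
  set w := padicValNat p m with hw
  have hpw : p ^ w ≤ m := Nat.le_of_dvd (by omega) pow_padicValNat_dvd
  rcases Nat.eq_zero_or_pos w with h0 | h1
  · omega
  by_cases hp2 : p = 2
  · subst hp2
    rcases Nat.lt_or_ge w 2 with hw2 | hw2
    · have hw1 : w = 1 := by omega
      have h2m : 2 ∣ m := by
        have := pow_padicValNat_dvd (p := 2) (n := m)
        rwa [← hw, hw1, pow_one] at this
      omega
    · have := aux_two_pow w hw2
      omega
  · have hp3 : 3 ≤ p := by
      have h2 := hp.out.two_le
      rcases Nat.lt_or_ge p 3 with h3 | h3 <;> omega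
    have h3a := aux_three_pow w h1
    have h3b : 3 ^ w ≤ p ^ w := Nat.pow_le_pow_left hp3 w
    omega

lemma V_pow_div (m : ℕ) (hm : 2 ≤ m) (h : ¬(p = 2 ∧ m = 2)) :
    V p 2 ((p : ℚ) ^ m / m) := by
  have hle := val_nat_add_two_le (p := p) m hm h
  have hp0 : (p : ℚ) ≠ 0 := Nat.cast_ne_zero.2 hp.out.pos.ne'
  have hm0 : (m : ℚ) ≠ 0 := Nat.cast_ne_zero.2 (by omega)
  refine Or.inr ?_
  rw [padicValRat.div (pow_ne_zero m hp0) hm0, padicValRat.pow,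
    padicValRat.self hp.out.one_lt, padicValRat.of_nat, mul_one]
  omega

/-- The key term bound. -/
lemma term_bound (n i : ℕ) (hne : Even n) (hn : 0 < n) (hi : i < n)
    (IH : V p (-1) (bernoulli i)) :
    V p 1 (bernoulli i * ((n + 1).choose i) * (p : ℚ) ^ (n + 1 - i) / (n + 1)) := by
  set m := n + 1 - i with hm
  have hm2 : 2 ≤ m := by omega
  have key : (n.choose i : ℚ) * (n + 1) = ((n + 1).choose i : ℚ) * m := by
    rw [hm]; exact_mod_cast congrArg Nat.cast (Nat.choose_mul_succ_eq n i)
  have hn1 : ((n : ℚ) + 1) ≠ 0 := by positivity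
  have hmQ : (m : ℚ) ≠ 0 := Nat.cast_ne_zero.2 (by omega)
  have ht : bernoulli i * ((n + 1).choose i) * (p : ℚ) ^ m / (n + 1) =
      bernoulli i * (n.choose i) * ((p : ℚ) ^ m / m) := by
    have hdd : ((n + 1).choose i : ℚ) / (n + 1) = (n.choose i : ℚ) / m := by
      rw [div_eq_div_iff hn1 hmQ]; linear_combination -key
    calc bernoulli i * ((n + 1).choose i) * (p : ℚ) ^ m / (n + 1)
        = bernoulli i * (((n + 1).choose i : ℚ) / (n + 1)) * (p : ℚ) ^ m := by ring
      _ = bernoulli i * ((n.choose i : ℚ) / m) * (p : ℚ) ^ m := by rw [hdd]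
      _ = bernoulli i * (n.choose i) * ((p : ℚ) ^ m / m) := by ring
  rw [show ((n : ℚ) + 1) = ((n + 1 : ℕ) : ℚ) by push_cast; ring] at ht ⊢
  rw [ht]
  by_cases hex : p = 2 ∧ m = 2
  · obtain ⟨hp2, hm2'⟩ := hex
    have hi' : i = n - 1 := by omega
    have hcn : n.choose i = n := by
      subst hi'
      rw [← Nat.choose_symm (by omega), show n - (n - 1) = 1 by omega, Nat.choose_one_right]
    have hVc : V p 1 (n.choose i : ℚ) := by
      rw [hcn]
      refine Or.inr ?_
      rw [padicValRat.of_nat]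
      have h1 : 1 ≤ padicValNat p n := by
        apply one_le_padicValNat_of_dvd hn.ne'
        rw [hp2]; exact hne.two_dvd
      exact_mod_cast h1
    have hVp : V p 1 ((p : ℚ) ^ m / m) := by
      refine Or.inr ?_
      rw [hp2, hm2']
      norm_num
      have h21 := padicValRat.self (p := 2) (by norm_num)
      norm_num at h21
      omega
    have hall := (IH.mul hVc).mul hVp
    exact hall.mono (by norm_num)
  · have hall := (IH.mul (V_natCast (n.choose i))).mul (V_pow_div m hm2 hex)
    exact hall.mono (by norm_num)

lemma sum_pow_zmod (n : ℕ) (hn : 0 < n) :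
    ∑ x : ZMod p, x ^ n = if (p - 1) ∣ n then -1 else 0 := by
  classical
  have h0 : ∑ x : ZMod p, x ^ n = ∑ x : (ZMod p)ˣ, (x : ZMod p) ^ n := by
    rw [← Finset.sum_erase_add Finset.univ _ (Finset.mem_univ (0 : ZMod p)),
      zero_pow hn.ne', add_zero]
    refine Finset.sum_bij' (fun (x : ZMod p) (hx : x ∈ univ.erase 0) =>
        Units.mk0 x (Finset.mem_erase.1 hx).1)
      (fun (u : (ZMod p)ˣ) (_ : u ∈ univ) => (u : ZMod p)) ?_ ?_ ?_ ?_ ?_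
    case refine_1 => intro a ha; exact mem_univ _
    case refine_2 => intro u _; exact Finset.mem_erase.2 ⟨u.ne_zero, mem_univ _⟩
    case refine_3 => intro a ha; rfl
    case refine_4 => intro u _; exact Units.ext rfl
    case refine_5 => intro a ha; rfl
  rw [h0, FiniteField.sum_pow_units (ZMod p) n, ZMod.card p]

lemma range_cast_sum_pow (n : ℕ) :
    ∑ k ∈ range p, ((k : ZMod p)) ^ n = ∑ x : ZMod p, x ^ n := by
  refine Finset.sum_bij' (fun (k : ℕ) (_ : k ∈ range p) => (k : ZMod p))
    (fun (x : ZMod p) (_ : x ∈ univ) => x.val) ?_ ?_ ?_ ?_ ?_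
  case refine_1 => intro a ha; exact mem_univ _
  case refine_2 => intro x _; exact mem_range.2 (ZMod.val_lt x)
  case refine_3 => intro a ha; exact ZMod.val_cast_of_lt (mem_range.1 ha)
  case refine_4 => intro x _; exact ZMod.natCast_rightInverse x
  case refine_5 => intro a ha; rfl

lemma sum_cong (n : ℕ) (hn : 0 < n) :
    V p 1 ((∑ k ∈ range p, (k : ℚ) ^ n) - (if (p - 1) ∣ n then (-1 : ℚ) else 0)) := by
  set Z : ℤ := (∑ k ∈ range p, (k : ℤ) ^ n) - (if (p - 1) ∣ n then (-1 : ℤ) else 0) with hZ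
  have hcast : ((Z : ℚ)) = (∑ k ∈ range p, (k : ℚ) ^ n) - (if (p - 1) ∣ n then (-1 : ℚ) else 0) := by
    rw [hZ]; push_cast; split_ifs <;> push_cast <;> ring
  have hdvd : (p : ℤ) ∣ Z := by
    rw [← ZMod.intCast_zmod_eq_zero_iff_dvd]
    rw [hZ]
    push_cast
    rw [range_cast_sum_pow, sum_pow_zmod n hn]
    split_ifs <;> simp
  rw [← hcast]
  by_cases hZ0 : Z = 0
  · exact Or.inl (by simp [hZ0])
  refine Or.inr ?_
  rw [padicValRat.of_int]
  have h1 : 1 ≤ padicValNat p Z.natAbs := by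
    apply one_le_padicValNat_of_dvd (Int.natAbs_pos.2 hZ0).ne'
    exact Int.natAbs_dvd_natAbs.2 (by simpa using hdvd)
  simpa [padicValInt] using (by exact_mod_cast h1 : (1 : ℤ) ≤ (padicValNat p Z.natAbs : ℤ))

lemma main_cong (n : ℕ) (hn : 0 < n) (hne : Even n)
    (IH : ∀ i, i < n → V p (-1) (bernoulli i)) :
    V p 1 ((p : ℚ) * bernoulli n - (if (p - 1) ∣ n then (-1 : ℚ) else 0)) := by
  have H := sum_range_pow p n
  rw [Finset.sum_range_succ] at H
  have hn1 : ((n : ℚ) + 1) ≠ 0 := by positivity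
  have hlast : bernoulli n * ((n + 1).choose n) * (p : ℚ) ^ (n + 1 - n) / (n + 1) =
      (p : ℚ) * bernoulli n := by
    rw [Nat.choose_succ_self_right, show n + 1 - n = 1 by omega, pow_one]
    push_cast
    field_simp
  rw [hlast] at H
  have hPB : (p : ℚ) * bernoulli n =
      (∑ k ∈ range p, (k : ℚ) ^ n) -
        ∑ i ∈ range n, bernoulli i * ((n + 1).choose i) * (p : ℚ) ^ (n + 1 - i) / (n + 1) := by
    linarith [H]
  have hT : V p 1 (∑ i ∈ range n,
      bernoulli i * ((n + 1).choose i) * (p : ℚ) ^ (n + 1 - i) / (n + 1)) := by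
    refine V_sum fun i hi => ?_
    exact term_bound n i hne hn (mem_range.1 hi) (IH i (mem_range.1 hi))
  have hS := sum_cong (p := p) n hn
  have := hS.sub hT
  convert this using 1
  rw [hPB]; ring

lemma bern_V (n : ℕ) : V p (-1) (bernoulli n) := by
  induction n using Nat.strong_induction_on with
  | _ n IH =>
    rcases Nat.eq_zero_or_pos n with rfl | hn
    · exact Or.inr (by simp)
    rcases Nat.even_or_odd n with hne | hno
    · -- even positive case
      have hV := main_cong n hn hne IH
      set ε : ℚ := if (p - 1) ∣ n then (-1 : ℚ) else 0 with hε
      have hVe : V p 0 ε := by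
        rw [hε]; split_ifs
        · exact Or.inr (by simp)
        · exact Or.inl rfl
      have hPB : V p 0 ((p : ℚ) * bernoulli n) := by
        have h := (hV.mono (by norm_num : (0:ℤ) ≤ 1)).add hVe
        simpa using h
      by_cases hB : bernoulli n = 0
      · exact Or.inl hB
      refine Or.inr ?_
      have hp0 : (p : ℚ) ≠ 0 := Nat.cast_ne_zero.2 hp.out.pos.ne'
      rcases hPB with h0 | h0
      · exact absurd h0 (mul_ne_zero hp0 hB)
      · rw [padicValRat.mul hp0 hB, padicValRat.self hp.out.one_lt] at h0
        omega
    · -- odd case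
      rcases Nat.lt_or_ge n 2 with h2 | h2
      · have : n = 1 := by omega
        subst this
        rw [bernoulli_one]
        by_cases hp2 : p = 2
        · refine Or.inr ?_
          subst hp2
          rw [show (-1 / 2 : ℚ) = -(2 : ℚ)⁻¹ by norm_num, padicValRat.neg, padicValRat.inv]
          have h21 := padicValRat.self (p := 2) (by norm_num)
          norm_num at h21 ⊢
          omega
        · refine Or.inr ?_
          rw [show (-1 / 2 : ℚ) = -((2:ℕ) : ℚ)⁻¹ by norm_num, padicValRat.neg, padicValRat.inv,
            padicValRat.of_nat]
          have : padicValNat p 2 = 0 := padicValNat.eq_zero_of_not_dvd (by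
            intro hdvd
            exact hp2 ((Nat.prime_dvd_prime_iff_eq hp.out Nat.prime_two).1 hdvd))
          simp [this]
      · exact Or.inl (by
          rw [bernoulli_eq_bernoulli'_of_ne_one (by omega)]
          exact bernoulli'_eq_zero_of_odd hno (by omega))

lemma val_eq_neg_one (n : ℕ) (hn : 0 < n) (hne : Even n) (hd : (p - 1) ∣ n) :
    bernoulli n ≠ 0 ∧ padicValRat p (bernoulli n) = -1 := by
  have hV := main_cong n hn hne (fun i _ => bern_V (p := p) i)
  rw [if_pos hd, sub_neg_eq_add] at hV
  have hp0 : (p : ℚ) ≠ 0 := Nat.cast_ne_zero.2 hp.out.pos.ne'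
  have hB : bernoulli n ≠ 0 := by
    intro h
    rw [h, mul_zero, zero_add] at hV
    rcases hV with h1 | h1
    · norm_num at h1
    · simp at h1
  refine ⟨hB, ?_⟩
  have hlow : (-1 : ℤ) ≤ padicValRat p (bernoulli n) := by
    rcases bern_V (p := p) n with h | h
    · exact absurd h hB
    · exact h
  -- now show valuation ≤ -1
  by_contra hne'
  have hge : 0 ≤ padicValRat p (bernoulli n) := by
    rcases lt_or_ge (padicValRat p (bernoulli n)) 0 with h | h
    · exact absurd (by omega : padicValRat p (bernoulli n) = -1) hne'
    · exact h
  have hx0 : (p : ℚ) * bernoulli n ≠ 0 := mul_ne_zero hp0 hB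
  have hvx : 1 ≤ padicValRat p ((p : ℚ) * bernoulli n) := by
    rw [padicValRat.mul hp0 hB, padicValRat.self hp.out.one_lt]
    omega
  by_cases hs0 : (p : ℚ) * bernoulli n + 1 = 0
  · have : (p : ℚ) * bernoulli n = -1 := by linarith
    rw [this] at hvx
    simp [padicValRat.neg] at hvx
  rcases hV with h1 | h1
  · exact hs0 h1
  · have := padicValRat.add_eq_min (p := p) hs0 hx0 one_ne_zero (by
      rw [padicValRat.one]; omega)
    rw [this, padicValRat.one] at h1
    exact absurd (h1.trans (min_le_right _ _)) (by norm_num)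

lemma val_nonneg (n : ℕ) (hn : 0 < n) (hne : Even n) (hd : ¬(p - 1) ∣ n) :
    V p 0 (bernoulli n) := by
  have hV := main_cong n hn hne (fun i _ => bern_V (p := p) i)
  rw [if_neg hd, sub_zero] at hV
  have hp0 : (p : ℚ) ≠ 0 := Nat.cast_ne_zero.2 hp.out.pos.ne'
  by_cases hB : bernoulli n = 0
  · exact Or.inl hB
  refine Or.inr ?_
  rcases hV with h1 | h1
  · exact absurd h1 (mul_ne_zero hp0 hB)
  · rw [padicValRat.mul hp0 hB, padicValRat.self hp.out.one_lt] at h1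
    omega

lemma num_not_dvd {q : ℚ} (h : p ∣ q.den) : ¬ (p : ℤ) ∣ q.num := by
  intro hnum
  have h1 : p ∣ q.num.natAbs := Int.natCast_dvd_natCast.1 (by
    exact (Int.dvd_natAbs).2 hnum)
  have h2 : p ∣ Nat.gcd q.num.natAbs q.den := Nat.dvd_gcd h1 h
  rw [Nat.coprime_iff_gcd_eq_one.1 q.reduced] at h2
  exact hp.out.one_lt.ne' (Nat.dvd_one.1 h2)

lemma den_val_one (n : ℕ) (hn : 0 < n) (hne : Even n) (hd : (p - 1) ∣ n) :
    padicValNat p (bernoulli n).den = 1 := by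
  obtain ⟨hB, hval⟩ := val_eq_neg_one (p := p) n hn hne hd
  rw [padicValRat_def] at hval
  by_cases hdvd : p ∣ (bernoulli n).den
  · have h0 : padicValInt p (bernoulli n).num = 0 :=
      padicValInt.eq_zero_of_not_dvd (num_not_dvd hdvd)
    rw [h0] at hval
    omega
  · rw [padicValNat.eq_zero_of_not_dvd hdvd] at hval
    have : (0 : ℤ) ≤ padicValInt p (bernoulli n).num := by
      simp [padicValInt]
    omega

lemma den_val_zero (n : ℕ) (hn : 0 < n) (hne : Even n) (hd : ¬(p - 1) ∣ n) :
    padicValNat p (bernoulli n).den = 0 := by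
  rcases val_nonneg (p := p) n hn hne hd with h0 | h0
  · rw [h0]; simp
  by_cases hdvd : p ∣ (bernoulli n).den
  · exfalso
    have hz : padicValInt p (bernoulli n).num = 0 :=
      padicValInt.eq_zero_of_not_dvd (num_not_dvd hdvd)
    rw [padicValRat_def, hz] at h0
    have h1 : 1 ≤ padicValNat p (bernoulli n).den :=
      one_le_padicValNat_of_dvd (bernoulli n).pos.ne' hdvd
    omega
  · exact padicValNat.eq_zero_of_not_dvd hdvd

end VSC

/-- Von Staudt–Clausen corollary: for even positive `n`, the denominator of `B_n`
equals the product of all primes `p` with `(p-1) ∣ n`. -/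
theorem von_staudt_clausen_den (n : ℕ) (hn : 0 < n) (hne : Even n) :
    (bernoulli n).den =
      ∏ p ∈ (Finset.range (n + 2)).filter (fun p => p.Prime ∧ (p - 1) ∣ n), p := by
  classical
  have hd0 : (bernoulli n).den ≠ 0 := (bernoulli n).pos.ne'
  have hsetseq : (bernoulli n).den.primeFactors =
      (Finset.range (n + 2)).filter (fun p => p.Prime ∧ (p - 1) ∣ n) := by
    ext q
    simp only [Nat.mem_primeFactors, Finset.mem_filter, Finset.mem_range]
    constructor
    · rintro ⟨hq, hqd, -⟩
      haveI : Fact q.Prime := ⟨hq⟩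
      have hdiv : (q - 1) ∣ n := by
        by_contra hcon
        have := VSC.den_val_zero (p := q) n hn hne hcon
        have h1 : 1 ≤ padicValNat q (bernoulli n).den := one_le_padicValNat_of_dvd (bernoulli n).pos.ne' hqd
        omega
      refine ⟨?_, hq, hdiv⟩
      have : q - 1 ≤ n := Nat.le_of_dvd hn hdiv
      have := hq.two_le
      omega
    · rintro ⟨-, hq, hdiv⟩
      haveI : Fact q.Prime := ⟨hq⟩
      have h1 := VSC.den_val_one (p := q) n hn hne hdiv
      refine ⟨hq, (dvd_iff_padicValNat_ne_zero hd0).2 (by omega), hd0⟩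
  have hfact : ∀ q ∈ (bernoulli n).den.primeFactors, (bernoulli n).den.factorization q = 1 := by
    intro q hq
    obtain ⟨hqp, -, -⟩ := Nat.mem_primeFactors.1 hq
    haveI : Fact q.Prime := ⟨hqp⟩
    have hdiv : (q - 1) ∣ n := by
      have := hsetseq ▸ hq
      exact (Finset.mem_filter.1 this).2.2
    rw [Nat.factorization_def (bernoulli n).den hqp]
    exact VSC.den_val_one (p := q) n hn hne hdiv
  calc (bernoulli n).den = (bernoulli n).den.factorization.prod (· ^ ·) := (Nat.factorization_prod_pow_eq_self hd0).symm
    _ = ∏ q ∈ (bernoulli n).den.primeFactors, q ^ (bernoulli n).den.factorization q := by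
        rw [Finsupp.prod, Nat.support_factorization]
    _ = ∏ q ∈ (bernoulli n).den.primeFactors, q := Finset.prod_congr rfl fun q hq => by rw [hfact q hq, pow_one]
    _ = _ := by rw [hsetseq]
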